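/- arXiv:1507.01231 — 5 statements merged into one kernel-verified Lean document; each statement's English description precedes it below -/
import Mathlib

section
/- Let k be a positive integer and let D be a difference cover of [0..k). Then for any integers i and j, there exists d ∈ [0..k) such that (i + d) mod k ∈ D and (j + d) mod k ∈ D. -/
/-- `D` is a difference cover of `[0..k)`: `D ⊆ {0, ..., k-1}` and for every
`x ∈ [0..k)` there are `y, z ∈ D` with `y - z ≡ x (mod k)`. -/
def IsDiffCover (k : ℕ) (D : Finset ℕ) : Prop :=
  (∀ d ∈ D, d < k) ∧
    ∀ x < k, ∃ y ∈ D, ∃ z ∈ D, (y : ℤ) - (z : ℤ) ≡ (x : ℤ) [ZMOD k]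

/-- For any difference cover `D` of `[0..k)` and any integers `i, j`, there is
`d ∈ [0..k)` such that `(i + d) mod k ∈ D` and `(j + d) mod k ∈ D`. -/
theorem diff_cover_shift (k : ℕ) (hk : 0 < k) (D : Finset ℕ) (hD : IsDiffCover k D)
    (i j : ℤ) :
    ∃ d : ℕ, d < k ∧ ((i + d) % (k : ℤ)).toNat ∈ D ∧ ((j + d) % (k : ℤ)).toNat ∈ D := by
  obtain ⟨hDlt, hcov⟩ := hD
  have hkz : (0 : ℤ) < k := by exact_mod_cast hk
  set x : ℕ := ((i - j) % (k : ℤ)).toNat with hxdef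
  have hxnn : 0 ≤ (i - j) % (k : ℤ) := Int.emod_nonneg _ (by omega)
  have hxlt' : (i - j) % (k : ℤ) < k := Int.emod_lt_of_pos _ hkz
  have hxlt : x < k := by omega
  have hxeq : (x : ℤ) = (i - j) % (k : ℤ) := Int.toNat_of_nonneg hxnn
  obtain ⟨y, hy, z, hz, hyz⟩ := hcov x hxlt
  have hylt : y < k := hDlt y hy
  have hzlt : z < k := hDlt z hz
  have hdnn : 0 ≤ ((z : ℤ) - j) % (k : ℤ) := Int.emod_nonneg _ (by omega)
  have hdlt : ((z : ℤ) - j) % (k : ℤ) < k := Int.emod_lt_of_pos _ hkz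
  refine ⟨(((z : ℤ) - j) % (k : ℤ)).toNat, by omega, ?_, ?_⟩
  · have hd : ((((z : ℤ) - j) % (k : ℤ)).toNat : ℤ) = ((z : ℤ) - j) % (k : ℤ) :=
      Int.toNat_of_nonneg hdnn
    have h1 : (i + (((z : ℤ) - j) % (k : ℤ)).toNat) ≡ (y : ℤ) [ZMOD k] := by
      rw [hd]
      calc i + ((z : ℤ) - j) % (k : ℤ)
          ≡ i + ((z : ℤ) - j) [ZMOD k] :=
            Int.ModEq.add_left i (Int.emod_emod_of_dvd _ dvd_rfl)
        _ = (z : ℤ) + (i - j) := by ring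
        _ ≡ (z : ℤ) + (x : ℤ) [ZMOD k] := by
            rw [hxeq]
            exact Int.ModEq.add_left _ (Int.emod_emod_of_dvd _ dvd_rfl).symm
        _ ≡ (z : ℤ) + ((y : ℤ) - (z : ℤ)) [ZMOD k] := Int.ModEq.add_left _ hyz.symm
        _ = y := by ring
    have : ((i + (((z : ℤ) - j) % (k : ℤ)).toNat) % (k : ℤ)) = (y : ℤ) := by
      have := h1
      unfold Int.ModEq at this
      rw [this, Int.emod_eq_of_lt (by positivity) (by exact_mod_cast hylt)]
    rw [this]
    simpa using hy
  · have hd : ((((z : ℤ) - j) % (k : ℤ)).toNat : ℤ) = ((z : ℤ) - j) % (k : ℤ) :=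
      Int.toNat_of_nonneg hdnn
    have h1 : (j + (((z : ℤ) - j) % (k : ℤ)).toNat) ≡ (z : ℤ) [ZMOD k] := by
      rw [hd]
      calc j + ((z : ℤ) - j) % (k : ℤ)
          ≡ j + ((z : ℤ) - j) [ZMOD k] :=
            Int.ModEq.add_left j (Int.emod_emod_of_dvd _ dvd_rfl)
        _ = (z : ℤ) := by ring
    have : ((j + (((z : ℤ) - j) % (k : ℤ)).toNat) % (k : ℤ)) = (z : ℤ) := by
      unfold Int.ModEq at h1
      rw [h1, Int.emod_eq_of_lt (by positivity) (by exact_mod_cast hzlt)]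
    rw [this]
    simpa using hz
end

section
/- Let k be a positive integer and set r = ⌊√k⌋. Then the set D = {x ∈ [0..k) : x ≤ r} ∪ {x ∈ [0..k) : r divides x} is a difference cover of [0..k). -/
/-- For `r = ⌊√k⌋`, the set `{x ∈ [0..k) : x ≤ r} ∪ {x ∈ [0..k) : r ∣ x}` is a
difference cover of `[0..k)`. -/
theorem simple_diff_cover (k : ℕ) (hk : 0 < k) :
    IsDiffCover k
      ((Finset.range k).filter (fun x => x ≤ Nat.sqrt k) ∪
        (Finset.range k).filter (fun x => Nat.sqrt k ∣ x)) := by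
  set r := Nat.sqrt k with hr
  have hr1 : 1 ≤ r := Nat.sqrt_pos.mpr hk
  have hrk : r ≤ k := Nat.sqrt_le_self k
  constructor
  · intro d hd
    simp only [Finset.mem_union, Finset.mem_filter, Finset.mem_range] at hd
    rcases hd with ⟨h, _⟩ | ⟨h, _⟩ <;> exact h
  · intro x hx
    have hmem : ∀ d, d < k → (d ≤ r ∨ r ∣ d) →
        d ∈ (Finset.range k).filter (fun x => x ≤ r) ∪
          (Finset.range k).filter (fun x => r ∣ x) := by
      intro d hd hc
      simp only [Finset.mem_union, Finset.mem_filter, Finset.mem_range]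
      tauto
    set s := x % r with hs
    set q := x / r with hq
    have hsr : s < r := Nat.mod_lt x hr1
    have hxqs : x = q * r + s := by
      rw [hq, hs, mul_comm]; exact (Nat.div_add_mod x r).symm
    set m := q * r with hm
    have hdm : r ∣ m := dvd_mul_left r q
    have hmx : x = m + s := hxqs
    by_cases hs0 : s = 0
    · refine ⟨x, hmem x hx (Or.inr (by rw [show x = m by omega]; exact hdm)),
        0, hmem 0 hk (Or.inl (by omega)), ?_⟩
      simp [Int.ModEq]
    · have hr2 : 2 ≤ r := by omega
      have hrk2 : r < k := lt_of_lt_of_le (by nlinarith) (Nat.sqrt_le' k)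
      by_cases hy : m + r < k
      · refine ⟨m + r, hmem _ hy (Or.inr (dvd_add hdm dvd_rfl)),
          r - s, hmem _ (by omega) (Or.inl (by omega)), ?_⟩
        have e : ((m + r : ℕ) : ℤ) - ((r - s : ℕ) : ℤ) = (x : ℤ) := by
          push_cast [Nat.le_of_lt hsr]; omega
        rw [e]
      · refine ⟨m + r - k, hmem _ (by omega) (Or.inl (by omega)),
          r - s, hmem _ (by omega) (Or.inl (by omega)), ?_⟩
        have e : ((m + r - k : ℕ) : ℤ) - ((r - s : ℕ) : ℤ) = (x : ℤ) - (k : ℤ) := by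
          push_cast [Nat.le_of_not_lt hy, Nat.le_of_lt hsr]; omega
        rw [e]
        show ((x : ℤ) - k) % k = (x : ℤ) % k
        simp [Int.sub_emod]
end

section
/- For every positive integer k there exists a difference cover D of [0..k) with |D| ≤ 2⌊√k⌋ + 3 (in particular, a difference cover with O(√k) elements). -/
/-- Every `[0..k)` has a difference cover with at most `2⌊√k⌋ + 3` elements
(in particular, with `O(√k)` elements). -/
theorem exists_small_diff_cover (k : ℕ) (hk : 0 < k) :
    ∃ D : Finset ℕ, IsDiffCover k D ∧ D.card ≤ 2 * Nat.sqrt k + 3 := by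
  set r := Nat.sqrt k with hr
  have hr0 : 0 < r := Nat.sqrt_pos.mpr hk
  have hrk : r ≤ k := Nat.sqrt_le_self k
  have hksq : k ≤ r * r + 2 * r := by
    have := Nat.lt_succ_sqrt k
    nlinarith [Nat.lt_succ_sqrt k]
  refine ⟨(Finset.range r) ∪ (Finset.range (r + 3)).image (fun q => q * r % k), ⟨?_, ?_⟩, ?_⟩
  · intro d hd
    rcases Finset.mem_union.mp hd with h | h
    · exact lt_of_lt_of_le (Finset.mem_range.mp h) hrk
    · obtain ⟨q, _, rfl⟩ := Finset.mem_image.mp h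
      exact Nat.mod_lt _ hk
  · intro x hx
    set q := (x + r - 1) / r with hq
    have hxq : x ≤ q * r := by
      rcases Nat.eq_zero_or_pos x with rfl | hx0
      · simp
      · have : x + r - 1 = (x - 1) + r := by omega
        rw [hq, this, Nat.add_div_right _ hr0]
        have h1 : (x - 1) / r * r ≤ x - 1 := Nat.div_mul_le_self _ _
        have h2 := Nat.div_add_mod (x - 1) r
        have h3 := Nat.mod_lt (x - 1) hr0
        have h4 : ((x - 1) / r + 1) * r = (x - 1) / r * r + r := by ring
        have h5 : r * ((x - 1) / r) = (x - 1) / r * r := Nat.mul_comm _ _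
        omega
    have hs : q * r - x < r := by
      have : q * r ≤ x + r - 1 := Nat.div_mul_le_self _ _
      omega
    have hq3 : q < r + 3 := by
      rw [hq, Nat.div_lt_iff_lt_mul hr0]
      have : (r + 3) * r = r * r + 3 * r := by ring
      omega
    refine ⟨q * r % k, ?_, q * r - x, ?_, ?_⟩
    · exact Finset.mem_union_right _ (Finset.mem_image.mpr ⟨q, Finset.mem_range.mpr hq3, rfl⟩)
    · exact Finset.mem_union_left _ (Finset.mem_range.mpr hs)
    · have h1 : ((q * r % k : ℕ) : ℤ) ≡ ((q * r : ℕ) : ℤ) [ZMOD k] := by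
        have : ((q * r % k : ℕ) : ℤ) = ((q * r : ℕ) : ℤ) % (k : ℤ) := by push_cast; ring_nf
        rw [Int.ModEq, this, Int.emod_emod_of_dvd _ dvd_rfl]
      have h2 : ((q * r : ℕ) : ℤ) - ((q * r - x : ℕ) : ℤ) = (x : ℤ) := by
        have : (q * r - x : ℕ) + x = q * r := by omega
        push_cast [Nat.cast_sub hxq]; ring
      calc ((q * r % k : ℕ) : ℤ) - ((q * r - x : ℕ) : ℤ)
          ≡ ((q * r : ℕ) : ℤ) - ((q * r - x : ℕ) : ℤ) [ZMOD k] := h1.sub_right _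
        _ = (x : ℤ) := h2
  · calc _ ≤ (Finset.range r).card + ((Finset.range (r + 3)).image (fun q => q * r % k)).card :=
        Finset.card_union_le _ _
      _ ≤ r + (r + 3) := by
        gcongr
        · simp
        · exact le_trans (Finset.card_image_le) (by simp)
      _ = 2 * r + 3 := by ring
end

section
/- Let s₁, s₂, ..., s_m be lists over a linearly ordered alphabet that are sorted in non-decreasing lexicographic order (s₁ ≤lex s₂ ≤lex ... ≤lex s_m, where a proper prefix precedes its extensions). Then for any indices 1 ≤ j < k ≤ m, the length of the longest common prefix of s_j and s_k equals min{ lcp(s_l, s_{l+1}) : j ≤ l < k }, where lcp(s, t) denotes the length of the longest common prefix of s and t. -/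
/-- The length of the longest common prefix of two lists, i.e. the largest `ℓ`
such that `take ℓ s = take ℓ t`. -/
def lcp {α : Type*} [DecidableEq α] : List α → List α → ℕ
  | a :: s, b :: t => if a = b then lcp s t + 1 else 0
  | _, _ => 0

lemma cons_lt_iff {α : Type*} [LinearOrder α] {x y : α} {a b : List α} :
    x :: a < y :: b ↔ x < y ∨ (x = y ∧ a < b) := by
  constructor
  · intro h
    cases h with
    | cons h => exact Or.inr ⟨rfl, h⟩
    | rel h => exact Or.inl h
  · rintro (h | ⟨rfl, h⟩)
    exacts [List.Lex.rel h, List.Lex.cons h]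

lemma cons_le_iff {α : Type*} [LinearOrder α] {x y : α} {a b : List α} :
    x :: a ≤ y :: b ↔ x < y ∨ (x = y ∧ a ≤ b) := by
  constructor
  · intro h
    rcases h.lt_or_eq with hlt | heq
    · exact (cons_lt_iff.mp hlt).imp id (fun h => ⟨h.1, h.2.le⟩)
    · injection heq with h1 h2
      exact Or.inr ⟨h1, h2.le⟩
  · rintro (h | ⟨rfl, h⟩)
    · exact le_of_lt (List.Lex.rel h)
    · exact List.cons_le_cons x h

lemma lcp_min {α : Type*} [LinearOrder α] :
    ∀ a b c : List α, a ≤ b → b ≤ c → lcp a c = min (lcp a b) (lcp b c)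
  | [], b, c, _, _ => by simp [lcp]
  | x :: a, [], c, hab, _ => absurd hab (List.nil_lt_cons x a).not_ge
  | x :: a, y :: b, [], _, hbc => absurd hbc (List.nil_lt_cons y b).not_ge
  | x :: a, y :: b, z :: c, hab, hbc => by
    rw [cons_le_iff] at hab hbc
    by_cases hxz : x = z
    · subst hxz
      have hxy : x = y :=
        le_antisymm (hab.elim le_of_lt fun h => h.1.le)
          (hbc.elim le_of_lt fun h => h.1.le)
      subst hxy
      have hab' : a ≤ b := (hab.resolve_left (lt_irrefl x)).2
      have hbc' : b ≤ c := (hbc.resolve_left (lt_irrefl x)).2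
      simp [lcp, lcp_min a b c hab' hbc', Nat.succ_min_succ]
    · have hne : x ≠ y ∨ y ≠ z := by
        by_contra h; push_neg at h; exact hxz (h.1.trans h.2)
      simp only [lcp, if_neg hxz]
      rcases hne with h | h
      · rw [if_neg h]; simp
      · rw [if_neg h]; simp

/-- If `s 1 ≤ s 2 ≤ ⋯ ≤ s m` in lexicographic order, then for `1 ≤ j < k ≤ m`
the length of the longest common prefix of `s j` and `s k` equals
`min { lcp (s l) (s (l+1)) : j ≤ l < k }`. -/
theorem lcp_sorted_min {α : Type*} [LinearOrder α] (m : ℕ) (s : ℕ → List α)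
    (hsorted : ∀ i j, 1 ≤ i → i ≤ j → j ≤ m → s i ≤ s j)
    (j k : ℕ) (hj : 1 ≤ j) (hjk : j < k) (hk : k ≤ m) :
    lcp (s j) (s k) =
      (Finset.Ico j k).inf' (Finset.nonempty_Ico.2 hjk)
        (fun l => lcp (s l) (s (l + 1))) := by
  induction k with
  | zero => omega
  | succ k ih =>
    rcases eq_or_lt_of_le (Nat.le_of_lt_succ hjk) with rfl | hjk'
    · simp [Nat.Ico_succ_singleton]
    · have hk' : k ≤ m := le_trans (Nat.le_succ k) hk
      have h1 : lcp (s j) (s (k + 1)) = min (lcp (s j) (s k)) (lcp (s k) (s (k + 1))) :=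
        lcp_min _ _ _ (hsorted j k hj hjk'.le hk') (hsorted k (k + 1) (by omega) (Nat.le_succ k) hk)
      rw [h1, ih hjk' hk']
      simp only [Nat.Ico_succ_right_eq_insert_Ico hjk'.le]
      rw [Finset.inf'_insert, min_comm]
end

section
/- Let w be a nonempty list over a linearly ordered alphabet whose last element is strictly smaller than every other element of w. Then for any two distinct positions 0 ≤ i < j < |w|, the suffix drop j w is not a prefix of the suffix drop i w, and drop i w is not a prefix of drop j w; consequently, any two distinct suffixes of w are strictly comparable in lexicographic order and pairwise distinct. -/
/-- If the last element of a nonempty list `w` is strictly smaller than every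
other element of `w`, then for any positions `i < j < |w|` neither of the
suffixes `drop i w`, `drop j w` is a prefix of the other; consequently the two
suffixes are strictly comparable in lexicographic order and distinct. -/
theorem suffixes_not_prefix_of_small_last {α : Type*} [LinearOrder α]
    (w : List α) (hne : w ≠ [])
    (hlast : ∀ i : ℕ, (hi : i + 1 < w.length) → w.getLast hne < w.get ⟨i, by omega⟩)
    (i j : ℕ) (hij : i < j) (hj : j < w.length) :
    ¬ (w.drop j <+: w.drop i) ∧ ¬ (w.drop i <+: w.drop j) ∧
      (w.drop i < w.drop j ∨ w.drop j < w.drop i) ∧ w.drop i ≠ w.drop j := by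
  have hn : 0 < w.length := List.length_pos_iff.mpr hne
  have hlenj : (w.drop j).length = w.length - j := List.length_drop
  have hleni : (w.drop i).length = w.length - i := List.length_drop
  have h1 : ¬ (w.drop j <+: w.drop i) := by
    intro hp
    have hk : w.length - j - 1 < (w.drop j).length := by omega
    have e1 : (w.drop i)[w.length - j - 1]'(by omega) =
        (w.drop j)[w.length - j - 1]'hk := (hp.getElem hk).symm
    rw [List.getElem_drop, List.getElem_drop] at e1
    have e2 : w[j + (w.length - j - 1)]'(by omega) = w.getLast hne := by
      rw [List.getLast_eq_getElem]
      congr 1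
      omega
    have hlt := hlast (i + (w.length - j - 1)) (by omega)
    rw [List.get_eq_getElem] at hlt
    rw [e2] at e1
    rw [← e1] at hlt
    exact lt_irrefl _ hlt
  have h2 : ¬ (w.drop i <+: w.drop j) := by
    intro hp
    have := hp.length_le
    omega
  refine ⟨h1, h2, ?_, ?_⟩
  · rcases lt_trichotomy (w.drop i) (w.drop j) with h | h | h
    · exact Or.inl h
    · exact absurd (h ▸ List.prefix_refl _) h2
    · exact Or.inr h
  · intro h
    exact h2 (h ▸ List.prefix_refl _)
end
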